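/- Under the β-polygon flow, the edge lengths evolve by dl_j/dt = -2 l_j^{β+1} - l_{j+1}^{β+1} cos θ_{j+1} - l_{j-1}^{β+1} cos θ_j, where θ_j is the interior angle at vertex X_j. -/

import Mathlib

/-- The right-hand side of the β-polygon flow:
`(M_X X)_j = l_j^β (X_{j+1} - X_j) + l_{j-1}^β (X_{j-1} - X_j)` with `l_j = ‖X_{j+1} - X_j‖`. -/
noncomputable def flowRHS {N : ℕ} [NeZero N] (β : ℝ) (X : ZMod N → ℂ) (j : ZMod N) : ℂ :=
  ((‖X (j + 1) - X j‖ ^ β : ℝ) : ℂ) * (X (j + 1) - X j)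
    + ((‖X (j - 1) - X j‖ ^ β : ℝ) : ℂ) * (X (j - 1) - X j)

lemma hasDerivAt_norm_complex {f : ℝ → ℂ} {d : ℂ} {t : ℝ} (hf : HasDerivAt f d t)
    (hne : f t ≠ 0) :
    HasDerivAt (fun s => ‖f s‖)
      (((f t).re * d.re + (f t).im * d.im) / ‖f t‖) t := by
  have hre : HasDerivAt (fun s => (f s).re) d.re t := by
    exact (Complex.reCLM.hasFDerivAt (x := f t)).comp_hasDerivAt t hf
  have him : HasDerivAt (fun s => (f s).im) d.im t := by
    exact (Complex.imCLM.hasFDerivAt (x := f t)).comp_hasDerivAt t hf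
  have hg : HasDerivAt (fun s => (f s).re ^ 2 + (f s).im ^ 2)
      (2 * (f t).re * d.re + 2 * (f t).im * d.im) t := by
    have := ((hre.pow 2).add (him.pow 2))
    refine this.congr_deriv ?_
    ring
  have hgt : (f t).re ^ 2 + (f t).im ^ 2 = ‖f t‖ ^ 2 := by
    rw [Complex.sq_norm, Complex.normSq_apply]; ring
  have hpos : (0:ℝ) < ‖f t‖ ^ 2 := pow_pos (norm_pos_iff.mpr hne) 2
  have hsqrt := (Real.hasDerivAt_sqrt (x := (f t).re ^ 2 + (f t).im ^ 2)
    (by rw [hgt]; exact hpos.ne')).comp t hg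
  have hfun : (fun s => Real.sqrt ((f s).re ^ 2 + (f s).im ^ 2)) = fun s => ‖f s‖ := by
    funext s
    rw [Complex.norm_def, Complex.normSq_apply]
    ring_nf
  simp only [Function.comp_def] at hsqrt
  rw [hfun] at hsqrt
  refine hsqrt.congr_deriv ?_
  rw [hgt, Real.sqrt_sq (norm_nonneg _)]
  have : ‖f t‖ ≠ 0 := norm_ne_zero_iff.mpr hne
  field_simp


theorem stmt7 (N : ℕ) [NeZero N] (β : ℝ) (hβ : 0 < β) (X : ℝ → ZMod N → ℂ)
    (l : ℝ → ZMod N → ℝ) (θ : ℝ → ZMod N → ℝ)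
    (hl : ∀ t j, l t j = ‖X t (j + 1) - X t j‖)
    (hlpos : ∀ t j, 0 < l t j)
    (hθ : ∀ t j, Real.cos (θ t j)
      = ((X t (j + 1) - X t j) * (starRingEnd ℂ) (X t (j - 1) - X t j)).re
          / (l t j * l t (j - 1)))
    (hflow : ∀ t j, HasDerivAt (fun s => X s j) (flowRHS β (X t) j) t) :
    ∀ t j, HasDerivAt (fun s => l s j)
      (-2 * l t j ^ (β + 1) - l t (j + 1) ^ (β + 1) * Real.cos (θ t (j + 1))
        - l t (j - 1) ^ (β + 1) * Real.cos (θ t j)) t := by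
  intro t j
  have hE : HasDerivAt (fun s => X s (j+1) - X s j)
      (flowRHS β (X t) (j+1) - flowRHS β (X t) j) t :=
    (hflow t (j+1)).sub (hflow t j)
  have hne : X t (j+1) - X t j ≠ 0 := by
    have := hlpos t j; rw [hl] at this; exact norm_pos_iff.mp this
  have key := hasDerivAt_norm_complex hE hne
  have hfun : (fun s => l s j) = fun s => ‖X s (j+1) - X s j‖ := funext fun s => hl s j
  rw [hfun]
  convert key using 1
  have haz := (hlpos t j).ne'
  have hbz := (hlpos t (j+1)).ne'
  have hcz := (hlpos t (j-1)).ne'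
  have hb : ‖X t (j+1+1) - X t (j+1)‖ = l t (j+1) := (hl t (j+1)).symm
  have ha' : ‖X t j - X t (j+1)‖ = l t j := by rw [norm_sub_rev]; exact (hl t j).symm
  have ha : ‖X t (j+1) - X t j‖ = l t j := (hl t j).symm
  have hc : ‖X t (j-1) - X t j‖ = l t (j-1) := by
    rw [norm_sub_rev]
    have := hl t (j-1)
    rw [sub_add_cancel] at this
    exact this.symm
  rw [hθ t (j+1), hθ t j]
  simp only [flowRHS, add_sub_cancel_right, sub_add_cancel]
  rw [ha, hb, ha', hc]
  rw [Real.rpow_add_one haz, Real.rpow_add_one hbz, Real.rpow_add_one hcz]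
  have hE2 : ((X t (j+1)).re - (X t j).re)^2 + ((X t (j+1)).im - (X t j).im)^2
      = l t j ^ 2 := by
    rw [hl t j, Complex.sq_norm, Complex.normSq_apply,
      Complex.sub_re, Complex.sub_im]
    ring
  simp only [Complex.sub_re, Complex.add_re, Complex.sub_im, Complex.add_im,
    Complex.mul_re, Complex.mul_im, Complex.ofReal_re, Complex.ofReal_im,
    Complex.conj_re, Complex.conj_im, RCLike.star_def]
  field_simp
  linear_combination (2 * l t j ^ β) * hE2
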